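/- Let n ≥ 3, 1 ≤ z ≤ ⌊(n-1)/2⌋, and let x : Fin n → ℝ be sorted (x₁ ≤ ... ≤ x_n). Let y* be an optimal location for the egalitarian objective with z outliers, and let S* be a corresponding optimal set of n - z non-outliers. Then max_{i ∈ S*} |x_{z+1} - x_i| ≤ 2 · OPT*_MC(x, z). -/

import Mathlib

/-- Egalitarian social cost with `z` outliers of placing the facility at `y`:
minimum over sets `S` of `n - z` non-outliers of the maximum distance. -/
noncomputable def OPTmc (n z : ℕ) (x : Fin n → ℝ) (y : ℝ) : ℝ :=
  sInf {c : ℝ | ∃ S : Finset (Fin n), S.card = n - z ∧ c = ⨆ i ∈ S, |y - x i|}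

/-- Optimal egalitarian social cost with `z` outliers. -/
noncomputable def OPTmcStar (n z : ℕ) (x : Fin n → ℝ) : ℝ :=
  sInf (Set.range (OPTmc n z x))

theorem stmt_6 (n z : ℕ) (hn : 3 ≤ n) (hz1 : 1 ≤ z) (hz2 : z ≤ (n - 1) / 2)
    (x : Fin n → ℝ) (hx : Monotone x)
    (ystar : ℝ) (Sstar : Finset (Fin n)) (hcard : Sstar.card = n - z)
    (hopt : (⨆ i ∈ Sstar, |ystar - x i|) = OPTmcStar n z x) :
    (⨆ i ∈ Sstar, |x ⟨z, by omega⟩ - x i|) ≤ 2 * OPTmcStar n z x := by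
  rw [← hopt]
  set a : Fin n := ⟨z, by omega⟩ with ha
  set R : ℝ := ⨆ i ∈ Sstar, |ystar - x i| with hR
  have hzn : z ≤ n := by omega
  -- each member's distance is at most R
  have key : ∀ i ∈ Sstar, |ystar - x i| ≤ R := by
    intro i hi
    have h1 : (⨆ _ : i ∈ Sstar, |ystar - x i|) = |ystar - x i| := ciSup_pos hi
    have h2 : (⨆ _ : i ∈ Sstar, |ystar - x i|) ≤ R :=
      le_ciSup (f := fun i => ⨆ _ : i ∈ Sstar, |ystar - x i|)
        (Set.Finite.bddAbove (Set.finite_range _)) i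
    rw [h1] at h2
    exact h2
  -- exists j ∈ Sstar with j ≤ a
  have hj : ∃ j ∈ Sstar, j ≤ a := by
    by_contra h
    push_neg at h
    have hdisj : Disjoint Sstar (Finset.Iic a) := by
      rw [Finset.disjoint_left]
      intro i hi hi2
      exact absurd (Finset.mem_Iic.mp hi2) (not_le.mpr (h i hi))
    have := Finset.card_union_of_disjoint hdisj ▸ Finset.card_le_univ (Sstar ∪ Finset.Iic a)
    rw [hcard, Fin.card_Iic] at this
    simp only [Fintype.card_fin] at this
    have hav : (a : ℕ) = z := rfl
    have hav' : ((⟨z, by omega⟩ : Fin n) : ℕ) = z := rfl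
    omega
  have hk : ∃ k ∈ Sstar, a ≤ k := by
    by_contra h
    push_neg at h
    have hdisj : Disjoint Sstar (Finset.Ici a) := by
      rw [Finset.disjoint_left]
      intro i hi hi2
      exact absurd (Finset.mem_Ici.mp hi2) (not_le.mpr (h i hi))
    have := Finset.card_union_of_disjoint hdisj ▸ Finset.card_le_univ (Sstar ∪ Finset.Ici a)
    rw [hcard, Fin.card_Ici] at this
    simp only [Fintype.card_fin] at this
    have hav : (a : ℕ) = z := rfl
    have hav' : ((⟨z, by omega⟩ : Fin n) : ℕ) = z := rfl
    omega
  obtain ⟨j, hjS, hja⟩ := hj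
  obtain ⟨k, hkS, hak⟩ := hk
  have hR0 : 0 ≤ R := le_trans (abs_nonneg _) (key j hjS)
  have hbj := abs_le.mp (key j hjS)
  have hbk := abs_le.mp (key k hkS)
  have hxja : x j ≤ x a := hx hja
  have hxak : x a ≤ x k := hx hak
  have hya : |ystar - x a| ≤ R := abs_le.mpr ⟨by linarith, by linarith⟩
  -- final bound
  refine Real.iSup_le (fun i => ?_) (by linarith)
  refine Real.iSup_le (fun hi => ?_) (by linarith)
  have htri : |x a - x i| ≤ |x a - ystar| + |ystar - x i| := abs_sub_le _ _ _
  have h1 : |x a - ystar| = |ystar - x a| := abs_sub_comm _ _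
  have h2 := key i hi
  rw [h1] at htri
  linarith
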